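/- Let C and D be Hopf algebras; let M be a C-bicomodule whose left C-comodule structure is trivial; suppose M is a D-bimodule, regarded as a left D-module via the adjoint action d.m = Σ d_{(1)} m S(d_{(2)}); suppose C is the trivial D-bimodule via the counit, and that the right C-comodule structure map of M is a morphism of D-bimodules. Equip each M ⊗ C^{⊗i} with the left D-module structure d.(m ⊗ c¹ ⊗ ⋯ ⊗ cⁱ) = Σ d_{(1)} m S(d_{(2)}) ⊗ c¹ ⊗ ⋯ ⊗ cⁱ. Then each differential dⁱ: M ⊗ C^{⊗i} → M ⊗ C^{⊗(i+1)} of the coHochschild complex is a morphism of left D-modules, and consequently every coHochschild homology group Hoch^i(C, M) inherits a left adjoint D-module structure. -/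

import Mathlib

/-!
STATEMENT 4: Let `C`, `D` be Hopf algebras, `M` a `C`-bicomodule with trivial left
`C`-comodule structure, also a `D`-bimodule regarded as a left `D`-module via the
adjoint action `d.m = Σ d₍₁₎ m S(d₍₂₎)`; `C` is the trivial `D`-bimodule via the
counit, and the right `C`-coaction of `M` is a morphism of `D`-bimodules.  Equip
`M ⊗ C^{⊗i}` with `d.(m ⊗ c¹ ⊗ ⋯ ⊗ cⁱ) = Σ d₍₁₎ m S(d₍₂₎) ⊗ c¹ ⊗ ⋯ ⊗ cⁱ`.  Then
every differential of the coHochschild complex is a morphism of left `D`-modules,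
and consequently every coHochschild homology group `Hoch^i(C,M)` inherits a left
adjoint `D`-module structure.
-/

noncomputable section

open TensorProduct

variable (K C : Type) [CommRing K] [AddCommGroup C] [Module K C]

/-- A bicomodule datum over a coalgebra `C`. -/
structure BicomodData where
  carrier : Type
  [acg : AddCommGroup carrier]
  [mod : Module K carrier]
  coactL : carrier →ₗ[K] C ⊗[K] carrier
  coactR : carrier →ₗ[K] carrier ⊗[K] C

attribute [instance] BicomodData.acg BicomodData.mod

variable {K C} (comul : C →ₗ[K] C ⊗[K] C)

/-- Tensoring a bicomodule with `C` on the right. -/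
def BicomodData.step (B : BicomodData K C) : BicomodData K C where
  carrier := B.carrier ⊗[K] C
  coactL := (TensorProduct.assoc K C B.carrier C).toLinearMap ∘ₗ
    (LinearMap.rTensor C B.coactL)
  coactR := (TensorProduct.assoc K B.carrier C C).symm.toLinearMap ∘ₗ
    (LinearMap.lTensor B.carrier comul)

/-- `cochain comul i B` has carrier `B.carrier ⊗ C^{⊗ i}`. -/
def cochain : ℕ → BicomodData K C → BicomodData K C
  | 0, B => B
  | (i+1), B => cochain i (B.step comul)

/-- Functoriality of `cochain` in the coefficient module. -/
def cochainMap : (i : ℕ) → (B B' : BicomodData K C) → (B.carrier →ₗ[K] B'.carrier) →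
    ((cochain comul i B).carrier →ₗ[K] (cochain comul i B').carrier)
  | 0, _, _, f => f
  | (i+1), B, B', f => cochainMap i (B.step comul) (B'.step comul) (LinearMap.rTensor C f)

/-- The coHochschild (Cartier) differential. -/
def cobarD : (i : ℕ) → (B : BicomodData K C) →
    ((cochain comul i B).carrier →ₗ[K] (cochain comul (i+1) B).carrier)
  | 0, B => B.coactR - (TensorProduct.comm K C B.carrier).toLinearMap ∘ₗ B.coactL
  | (i+1), B =>
      show (cochain comul i (B.step comul)).carrier →ₗ[K]
          (cochain comul (i+1) (B.step comul)).carrier from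
        (show (cochain comul i (B.step comul)).carrier →ₗ[K]
            (cochain comul (i+1) (B.step comul)).carrier from
          cochainMap comul i (B.step comul) ((B.step comul).step comul)
            (LinearMap.rTensor C B.coactR)) - cobarD i (B.step comul)

variable (D : Type) [AddCommGroup D] [Module K D]

/-- The left `D`-module structure on `M ⊗ C^{⊗ i}` induced by a left `D`-action on
the coefficients: `d.(m ⊗ c¹ ⊗ ⋯ ⊗ cⁱ) = (d.m) ⊗ c¹ ⊗ ⋯ ⊗ cⁱ`. -/
def Dact : (i : ℕ) → (B : BicomodData K C) → (D ⊗[K] B.carrier →ₗ[K] B.carrier) →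
    (D ⊗[K] (cochain comul i B).carrier →ₗ[K] (cochain comul i B).carrier)
  | 0, _, a => a
  | (i+1), B, a => Dact i (B.step comul)
      ((LinearMap.rTensor C a) ∘ₗ (TensorProduct.assoc K D B.carrier C).symm.toLinearMap)

variable {D} [Ring D] [HopfAlgebra K D]

/-- The adjoint action `d ⊗ m ↦ Σ d₍₁₎ m S(d₍₂₎)` built from a `D`-bimodule
structure `(aL, aR)` on `M`. -/
def adjointAction {M : Type} [AddCommGroup M] [Module K M]
    (aL : D ⊗[K] M →ₗ[K] M) (aR : M ⊗[K] D →ₗ[K] M) : D ⊗[K] M →ₗ[K] M :=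
  aR ∘ₗ (LinearMap.rTensor D aL) ∘ₗ
    (TensorProduct.assoc K D M D).symm.toLinearMap ∘ₗ
      (LinearMap.lTensor D (LinearMap.lTensor M (HopfAlgebra.antipode (R := K) (A := D)))) ∘ₗ
        (LinearMap.lTensor D (TensorProduct.comm K D M).toLinearMap) ∘ₗ
          (TensorProduct.assoc K D D M).toLinearMap ∘ₗ
            (LinearMap.rTensor M (Coalgebra.comul (R := K) (A := D)))

/-! ### Auxiliary lemmas -/

open LinearMap

section Aux

variable {E M : Type} [AddCommGroup E] [Module K E] [AddCommGroup M] [Module K M]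

/-- The induced `E`-action on `M ⊗ C` (acting on the left factor). -/
def indA (a : E ⊗[K] M →ₗ[K] M) : E ⊗[K] (M ⊗[K] C) →ₗ[K] M ⊗[K] C :=
  (LinearMap.rTensor C a) ∘ₗ (TensorProduct.assoc K E M C).symm.toLinearMap

lemma hlp {X N : Type} [AddCommGroup X] [Module K X] [AddCommGroup N] [Module K N]
    (f : X ⊗[K] M →ₗ[K] N) (x : X) (u : M ⊗[K] C) :
    LinearMap.rTensor C f ((TensorProduct.assoc K X M C).symm (x ⊗ₜ[K] u)) =
      LinearMap.rTensor C (f ∘ₗ TensorProduct.mk K X M x) u := by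
  induction u using TensorProduct.induction_on with
  | zero => simp
  | tmul m c => simp
  | add u v hu hv => simp [tmul_add, hu, hv]

lemma indA_apply (a : E ⊗[K] M →ₗ[K] M) (d : E) (u : M ⊗[K] C) :
    indA a (d ⊗ₜ[K] u) = LinearMap.rTensor C (a ∘ₗ TensorProduct.mk K E M d) u := by
  simp only [indA, LinearMap.comp_apply, LinearEquiv.coe_coe]
  exact hlp a d u

lemma indA_tmul (a : E ⊗[K] M →ₗ[K] M) (d : E) (m : M) (c : C) :
    indA a (d ⊗ₜ[K] (m ⊗ₜ[K] c)) = a (d ⊗ₜ[K] m) ⊗ₜ[K] c := by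
  simp [indA]

/-- Pointwise equivariance of a "coaction-like" map `g` with respect to an
action `a` of `E` on `M` (with `E` acting trivially on the `C`-factor). -/
def Pt (g : M →ₗ[K] M ⊗[K] C) (a : E ⊗[K] M →ₗ[K] M) : Prop :=
  ∀ (d : E) (m : M),
    g (a (d ⊗ₜ[K] m)) = LinearMap.rTensor C (a ∘ₗ TensorProduct.mk K E M d) (g m)

lemma pt_comp {g : M →ₗ[K] M ⊗[K] C} {a : E ⊗[K] M →ₗ[K] M} (h : Pt g a) :
    g ∘ₗ a = indA a ∘ₗ LinearMap.lTensor E g := by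
  apply TensorProduct.ext'
  intro d m
  simp only [LinearMap.comp_apply, LinearMap.lTensor_tmul, indA, LinearEquiv.coe_coe]
  rw [hlp]
  exact h d m

lemma Pt_coactRs (a : E ⊗[K] M →ₗ[K] M) :
    Pt ((TensorProduct.assoc K M C C).symm.toLinearMap ∘ₗ LinearMap.lTensor M comul)
      (indA a) := by
  intro d z
  induction z using TensorProduct.induction_on with
  | zero => simp [tmul_zero]
  | tmul m c =>
    simp only [LinearMap.comp_apply, indA_tmul, LinearMap.lTensor_tmul, LinearEquiv.coe_coe]
    generalize comul c = t
    induction t using TensorProduct.induction_on with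
    | zero => simp [tmul_zero]
    | tmul c1 c2 => simp [indA_tmul]
    | add t1 t2 h1 h2 => simp only [tmul_add, map_add, h1, h2]
  | add z1 z2 h1 h2 => simp only [tmul_add, map_add, h1, h2]

lemma comm_assoc_tmul (w : C ⊗[K] M) (c : C) :
    (TensorProduct.comm K C (M ⊗[K] C)) ((TensorProduct.assoc K C M C) (w ⊗ₜ[K] c)) =
      LinearMap.rTensor C ((TensorProduct.mk K M C).flip c)
        ((TensorProduct.comm K C M) w) := by
  induction w using TensorProduct.induction_on with
  | zero => simp [zero_tmul]
  | tmul c' m => simp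
  | add w1 w2 h1 h2 => simp only [add_tmul, map_add, h1, h2]

lemma Pt_coactLs {L : M →ₗ[K] C ⊗[K] M} {a : E ⊗[K] M →ₗ[K] M}
    (h : Pt ((TensorProduct.comm K C M).toLinearMap ∘ₗ L) a) :
    Pt ((TensorProduct.comm K C (M ⊗[K] C)).toLinearMap ∘ₗ
        ((TensorProduct.assoc K C M C).toLinearMap ∘ₗ LinearMap.rTensor C L))
      (indA a) := by
  intro d z
  have key : ∀ (c : C) (u : M ⊗[K] C),
      LinearMap.rTensor C ((TensorProduct.mk K M C).flip c)
          (LinearMap.rTensor C (a ∘ₗ TensorProduct.mk K E M d) u) =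
        LinearMap.rTensor C (indA a ∘ₗ TensorProduct.mk K E (M ⊗[K] C) d)
          (LinearMap.rTensor C ((TensorProduct.mk K M C).flip c) u) := by
    intro c u
    rw [← LinearMap.comp_apply, ← LinearMap.comp_apply, ← LinearMap.rTensor_comp,
      ← LinearMap.rTensor_comp]
    have : ((TensorProduct.mk K M C).flip c) ∘ₗ (a ∘ₗ TensorProduct.mk K E M d) =
        (indA a ∘ₗ TensorProduct.mk K E (M ⊗[K] C) d) ∘ₗ (TensorProduct.mk K M C).flip c := by
      ext m0
      simp [indA_tmul]
    rw [this]
  induction z using TensorProduct.induction_on with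
  | zero => simp [tmul_zero]
  | tmul m c =>
    simp only [LinearMap.comp_apply, indA_tmul, LinearMap.rTensor_tmul, LinearEquiv.coe_coe]
    rw [comm_assoc_tmul, comm_assoc_tmul]
    have hd := h d m
    simp only [LinearMap.comp_apply, LinearEquiv.coe_coe] at hd
    rw [hd, key]
  | add z1 z2 h1 h2 => simp only [tmul_add, map_add, h1, h2]

lemma comm_rT {g : M →ₗ[K] M ⊗[K] C} {a : E ⊗[K] M →ₗ[K] M} (h : Pt g a) :
    LinearMap.rTensor C g ∘ₗ indA a =
      indA (indA a) ∘ₗ LinearMap.lTensor E (LinearMap.rTensor C g) := by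
  apply TensorProduct.ext'
  intro d z
  induction z using TensorProduct.induction_on with
  | zero => simp [tmul_zero]
  | tmul m c =>
    simp only [LinearMap.comp_apply, LinearMap.lTensor_tmul, LinearMap.rTensor_tmul,
      indA_tmul, TensorProduct.mk_apply, h d m, indA_apply]
  | add z1 z2 h1 h2 => simp only [tmul_add, map_add, h1, h2]

lemma hlpR {X N : Type} [AddCommGroup X] [Module K X] [AddCommGroup N] [Module K N]
    (f : M ⊗[K] X →ₗ[K] N) (x : X) (u : M ⊗[K] C) :
    LinearMap.rTensor C f ((TensorProduct.assoc K M X C).symm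
        ((LinearMap.lTensor M (TensorProduct.comm K C X).toLinearMap)
          ((TensorProduct.assoc K M C X) (u ⊗ₜ[K] x)))) =
      LinearMap.rTensor C (f ∘ₗ (TensorProduct.mk K M X).flip x) u := by
  induction u using TensorProduct.induction_on with
  | zero => simp [zero_tmul]
  | tmul m c => simp
  | add u v hu hv => simp only [add_tmul, map_add, hu, hv]

lemma cochainMap_comm : ∀ (i : ℕ) (B1 B2 : BicomodData K C)
    (f : B1.carrier →ₗ[K] B2.carrier)
    (a1 : E ⊗[K] B1.carrier →ₗ[K] B1.carrier) (a2 : E ⊗[K] B2.carrier →ₗ[K] B2.carrier),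
    f ∘ₗ a1 = a2 ∘ₗ LinearMap.lTensor E f →
    cochainMap comul i B1 B2 f ∘ₗ Dact comul E i B1 a1 =
      Dact comul E i B2 a2 ∘ₗ LinearMap.lTensor E (cochainMap comul i B1 B2 f)
  | 0, B1, B2, f, a1, a2, hf => hf
  | (i+1), B1, B2, f, a1, a2, hf => by
    have hf' : (LinearMap.rTensor C f) ∘ₗ indA a1 =
        indA a2 ∘ₗ LinearMap.lTensor E (LinearMap.rTensor C f) := by
      apply TensorProduct.ext'
      intro d z
      induction z using TensorProduct.induction_on with
      | zero => simp [tmul_zero]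
      | tmul x c =>
        have := LinearMap.congr_fun hf (d ⊗ₜ[K] x)
        simp only [LinearMap.comp_apply, LinearMap.lTensor_tmul] at this
        simp only [LinearMap.comp_apply, LinearMap.lTensor_tmul, LinearMap.rTensor_tmul,
          indA_tmul, this]
      | add z1 z2 h1 h2 => simp only [tmul_add, map_add, h1, h2]
    exact cochainMap_comm i (B1.step comul) (B2.step comul) (LinearMap.rTensor C f)
      (indA a1) (indA a2) hf'

lemma indA_def (a : E ⊗[K] M →ₗ[K] M) :
    (LinearMap.rTensor C a) ∘ₗ (TensorProduct.assoc K E M C).symm.toLinearMap = indA a := rfl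

lemma mainLemma : ∀ (i : ℕ) (B : BicomodData K C) (a : E ⊗[K] B.carrier →ₗ[K] B.carrier),
    Pt B.coactR a →
    Pt ((TensorProduct.comm K C B.carrier).toLinearMap ∘ₗ B.coactL) a →
    cobarD comul i B ∘ₗ Dact comul E i B a =
      Dact comul E (i+1) B a ∘ₗ LinearMap.lTensor E (cobarD comul i B)
  | 0, B, a, h1, h2 => by
    have e1 := pt_comp h1
    have e2 := pt_comp h2
    simp only [indA] at e1 e2
    simp only [cobarD, Dact]
    show (B.coactR - (TensorProduct.comm K C B.carrier).toLinearMap ∘ₗ B.coactL) ∘ₗ a =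
      ((LinearMap.rTensor C a) ∘ₗ (TensorProduct.assoc K E B.carrier C).symm.toLinearMap) ∘ₗ
        LinearMap.lTensor E (B.coactR - (TensorProduct.comm K C B.carrier).toLinearMap ∘ₗ B.coactL)
    rw [LinearMap.sub_comp, LinearMap.lTensor_sub, LinearMap.comp_sub, e1, e2]
  | (i+1), B, a, h1, h2 => by
    have h1s : Pt (B.step comul).coactR (indA a) := Pt_coactRs comul a
    have h2s : Pt ((TensorProduct.comm K C (B.step comul).carrier).toLinearMap ∘ₗ
        (B.step comul).coactL) (indA a) := Pt_coactLs h2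
    have hIH := mainLemma i (B.step comul) (indA a) h1s h2s
    have hCM := cochainMap_comm comul i (B.step comul) ((B.step comul).step comul)
      (LinearMap.rTensor C B.coactR) (indA a) (indA (indA a)) (comm_rT h1)
    simp only [indA] at hIH hCM
    simp only [cobarD, Dact] at hIH ⊢
    have gen : ∀ {X Y : Type} [AddCommGroup X] [Module K X] [AddCommGroup Y] [Module K Y]
        (f g : X →ₗ[K] Y) (A : E ⊗[K] X →ₗ[K] X) (Bm : E ⊗[K] Y →ₗ[K] Y),
        f ∘ₗ A = Bm ∘ₗ LinearMap.lTensor E f → g ∘ₗ A = Bm ∘ₗ LinearMap.lTensor E g →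
        (f - g) ∘ₗ A = Bm ∘ₗ LinearMap.lTensor E (f - g) := by
      intro X Y _ _ _ _ f g A Bm hf hg
      rw [LinearMap.sub_comp, LinearMap.lTensor_sub, LinearMap.comp_sub, hf, hg]
    exact gen _ _ _ _ hCM hIH
/-- If an action on `N'` preserves a submodule `S`, it descends to `N' ⧸ S`. -/
lemma descendAux {N' : Type} [AddCommGroup N'] [Module K N'] (S : Submodule K N')
    (aker : E ⊗[K] N' →ₗ[K] N')
    (hstab : ∀ y : E ⊗[K] S, aker (LinearMap.lTensor E S.subtype y) ∈ S) :
    ∃ a' : E ⊗[K] (N' ⧸ S) →ₗ[K] (N' ⧸ S),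
      a' ∘ₗ LinearMap.lTensor E S.mkQ = S.mkQ ∘ₗ aker := by
  set q := LinearMap.lTensor E S.mkQ with hqdef
  have hq : Function.Surjective q :=
    LinearMap.lTensor_surjective E (Submodule.mkQ_surjective S)
  have hker_eq : LinearMap.ker q = LinearMap.range (LinearMap.lTensor E S.subtype) :=
    lTensor_mkQ E S
  have hle : LinearMap.ker q ≤ LinearMap.ker (S.mkQ ∘ₗ aker) := by
    rw [hker_eq]
    rintro x ⟨y, rfl⟩
    rw [LinearMap.mem_ker, LinearMap.comp_apply, Submodule.mkQ_apply,
      Submodule.Quotient.mk_eq_zero]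
    exact hstab y
  have hsymm : ∀ x : E ⊗[K] N',
      (q.quotKerEquivOfSurjective hq).symm (q x) = Submodule.Quotient.mk x := by
    intro x
    rw [LinearEquiv.symm_apply_eq]
    simp [LinearMap.quotKerEquivOfSurjective, LinearEquiv.trans_apply,
      LinearMap.quotKerEquivRange_apply_mk]
  refine ⟨(Submodule.liftQ (LinearMap.ker q) (S.mkQ ∘ₗ aker) hle) ∘ₗ
    (q.quotKerEquivOfSurjective hq).symm.toLinearMap, ?_⟩
  apply LinearMap.ext
  intro x
  simp only [LinearMap.comp_apply, LinearEquiv.coe_coe]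
  rw [show (LinearMap.lTensor E S.mkQ) x = q x from rfl, hsymm, Submodule.liftQ_apply,
    LinearMap.comp_apply]

end Aux

section Adj

variable {D' : Type} [Ring D'] [HopfAlgebra K D'] {M : Type} [AddCommGroup M] [Module K M]

/-- The adjoint-action integrand `(x ⊗ y) ⊗ m ↦ aR (aL (x ⊗ m) ⊗ S y)`. -/
def gmap (aL : D' ⊗[K] M →ₗ[K] M) (aR : M ⊗[K] D' →ₗ[K] M) :
    (D' ⊗[K] D') ⊗[K] M →ₗ[K] M :=
  aR ∘ₗ (LinearMap.rTensor D' aL) ∘ₗ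
    (TensorProduct.assoc K D' M D').symm.toLinearMap ∘ₗ
      (LinearMap.lTensor D' (LinearMap.lTensor M (HopfAlgebra.antipode (R := K) (A := D')))) ∘ₗ
        (LinearMap.lTensor D' (TensorProduct.comm K D' M).toLinearMap) ∘ₗ
          (TensorProduct.assoc K D' D' M).toLinearMap

lemma gmap_tmul (aL : D' ⊗[K] M →ₗ[K] M) (aR : M ⊗[K] D' →ₗ[K] M) (x y : D') (m : M) :
    gmap aL aR ((x ⊗ₜ[K] y) ⊗ₜ[K] m) =
      aR (aL (x ⊗ₜ[K] m) ⊗ₜ[K] (HopfAlgebra.antipode (R := K) (A := D') y)) := by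
  simp [gmap]

lemma adjointAction_apply (aL : D' ⊗[K] M →ₗ[K] M) (aR : M ⊗[K] D' →ₗ[K] M) (d : D') (m : M) :
    adjointAction aL aR (d ⊗ₜ[K] m) =
      gmap aL aR ((Coalgebra.comul (R := K) (A := D') d) ⊗ₜ[K] m) := by
  simp only [adjointAction, gmap, LinearMap.comp_apply, LinearMap.rTensor_tmul]

lemma Pt_adjoint {B : BicomodData K C}
    {aL : D' ⊗[K] B.carrier →ₗ[K] B.carrier} {aR : B.carrier ⊗[K] D' →ₗ[K] B.carrier}
    (hL : ∀ (d : D') (m : B.carrier), B.coactR (aL (d ⊗ₜ[K] m)) =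
      LinearMap.rTensor C (aL ∘ₗ TensorProduct.mk K D' B.carrier d) (B.coactR m))
    (hR : ∀ (m : B.carrier) (d : D'), B.coactR (aR (m ⊗ₜ[K] d)) =
      LinearMap.rTensor C (aR ∘ₗ (TensorProduct.mk K B.carrier D').flip d) (B.coactR m)) :
    Pt B.coactR (adjointAction aL aR) := by
  have key : ∀ (t : D' ⊗[K] D') (m : B.carrier),
      B.coactR (gmap aL aR (t ⊗ₜ[K] m)) =
        LinearMap.rTensor C (gmap aL aR ∘ₗ TensorProduct.mk K (D' ⊗[K] D') B.carrier t)
          (B.coactR m) := by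
    intro t m
    induction t using TensorProduct.induction_on with
    | zero => simp [zero_tmul]
    | tmul x y =>
      rw [gmap_tmul, hR, hL, ← LinearMap.comp_apply, ← LinearMap.rTensor_comp]
      have : (aR ∘ₗ (TensorProduct.mk K B.carrier D').flip
            (HopfAlgebra.antipode (R := K) (A := D') y)) ∘ₗ
            (aL ∘ₗ TensorProduct.mk K D' B.carrier x) =
          gmap aL aR ∘ₗ TensorProduct.mk K (D' ⊗[K] D') B.carrier (x ⊗ₜ[K] y) := by
        ext m0
        simp [gmap_tmul]
      rw [this]
    | add t1 t2 ht1 ht2 =>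
      simp only [add_tmul, map_add, ht1, ht2, LinearMap.comp_add, LinearMap.rTensor_add,
        LinearMap.add_apply]
  intro d m
  rw [adjointAction_apply, key]
  have : gmap aL aR ∘ₗ TensorProduct.mk K (D' ⊗[K] D') B.carrier
        (Coalgebra.comul (R := K) (A := D') d) =
      adjointAction aL aR ∘ₗ TensorProduct.mk K D' B.carrier d := by
    ext m0
    simp [adjointAction_apply]
  rw [this]

end Adj

set_option maxHeartbeats 1000000 in
theorem cobar_differentials_are_D_module_morphisms
    {K C : Type} [Field K] [CharZero K] [Ring C] [HopfAlgebra K C]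
    {D : Type} [Ring D] [HopfAlgebra K D]
    (B : BicomodData K C)
    -- the left `C`-comodule structure of `M` is trivial
    (htriv : B.coactL = (TensorProduct.mk K C B.carrier) 1)
    -- `M` is a `D`-bimodule via `aL`, `aR`
    (aL : D ⊗[K] B.carrier →ₗ[K] B.carrier) (aR : B.carrier ⊗[K] D →ₗ[K] B.carrier)
    (haL_one : ∀ m : B.carrier, aL ((1 : D) ⊗ₜ[K] m) = m)
    (haL_mul : ∀ (d d' : D) (m : B.carrier),
      aL (d ⊗ₜ[K] aL (d' ⊗ₜ[K] m)) = aL ((d * d') ⊗ₜ[K] m))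
    (haR_one : ∀ m : B.carrier, aR (m ⊗ₜ[K] (1 : D)) = m)
    (haR_mul : ∀ (m : B.carrier) (d d' : D),
      aR (aR (m ⊗ₜ[K] d) ⊗ₜ[K] d') = aR (m ⊗ₜ[K] (d * d')))
    (hact_comm : ∀ (d : D) (m : B.carrier) (d' : D),
      aR (aL (d ⊗ₜ[K] m) ⊗ₜ[K] d') = aL (d ⊗ₜ[K] aR (m ⊗ₜ[K] d')))
    -- the right `C`-coaction of `M` is a morphism of `D`-bimodules, where `D` acts
    -- trivially (through the counit) on the `C`-factor
    (hcoactR_aL : B.coactR ∘ₗ aL =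
      (LinearMap.rTensor C aL) ∘ₗ (TensorProduct.assoc K D B.carrier C).symm.toLinearMap ∘ₗ
        (LinearMap.lTensor D B.coactR))
    (hcoactR_aR : B.coactR ∘ₗ aR =
      (LinearMap.rTensor C aR) ∘ₗ (TensorProduct.assoc K B.carrier D C).symm.toLinearMap ∘ₗ
        (LinearMap.lTensor B.carrier (TensorProduct.comm K C D).toLinearMap) ∘ₗ
          (TensorProduct.assoc K B.carrier C D).toLinearMap ∘ₗ
            (LinearMap.rTensor D B.coactR)) :
    -- (1) every differential of the coHochschild complex is a morphism of left
    -- `D`-modules for the adjoint action on the coefficients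
    (∀ i : ℕ,
      (cobarD (Coalgebra.comul (R := K) (A := C)) i B) ∘ₗ
          Dact (Coalgebra.comul (R := K) (A := C)) D i B (adjointAction aL aR) =
        Dact (Coalgebra.comul (R := K) (A := C)) D (i+1) B (adjointAction aL aR) ∘ₗ
          (LinearMap.lTensor D (cobarD (Coalgebra.comul (R := K) (A := C)) i B))) ∧
    -- (2) consequently the cocycles are a `D`-submodule ...
    (∀ i : ℕ,
      ∃ aker : D ⊗[K] LinearMap.ker (cobarD (Coalgebra.comul (R := K) (A := C)) i B) →ₗ[K]
          LinearMap.ker (cobarD (Coalgebra.comul (R := K) (A := C)) i B),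
        (LinearMap.ker (cobarD (Coalgebra.comul (R := K) (A := C)) i B)).subtype ∘ₗ aker =
          Dact (Coalgebra.comul (R := K) (A := C)) D i B (adjointAction aL aR) ∘ₗ
            (LinearMap.lTensor D
              (LinearMap.ker (cobarD (Coalgebra.comul (R := K) (A := C)) i B)).subtype)) ∧
    -- ... and each coHochschild homology group inherits a left adjoint `D`-module
    -- structure from the one on the cocycles
    (∀ (i : ℕ)
      (aker : D ⊗[K] LinearMap.ker (cobarD (Coalgebra.comul (R := K) (A := C)) (i+1) B) →ₗ[K]
          LinearMap.ker (cobarD (Coalgebra.comul (R := K) (A := C)) (i+1) B)),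
      ((LinearMap.ker (cobarD (Coalgebra.comul (R := K) (A := C)) (i+1) B)).subtype ∘ₗ aker =
        Dact (Coalgebra.comul (R := K) (A := C)) D (i+1) B (adjointAction aL aR) ∘ₗ
          (LinearMap.lTensor D
            (LinearMap.ker (cobarD (Coalgebra.comul (R := K) (A := C)) (i+1) B)).subtype)) →
      ∃ a' : D ⊗[K] (LinearMap.ker (cobarD (Coalgebra.comul (R := K) (A := C)) (i+1) B) ⧸
              (Submodule.comap
                (LinearMap.ker (cobarD (Coalgebra.comul (R := K) (A := C)) (i+1) B)).subtype
                (LinearMap.range (cobarD (Coalgebra.comul (R := K) (A := C)) i B)))) →ₗ[K]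
            (LinearMap.ker (cobarD (Coalgebra.comul (R := K) (A := C)) (i+1) B) ⧸
              (Submodule.comap
                (LinearMap.ker (cobarD (Coalgebra.comul (R := K) (A := C)) (i+1) B)).subtype
                (LinearMap.range (cobarD (Coalgebra.comul (R := K) (A := C)) i B)))),
        a' ∘ₗ (LinearMap.lTensor D
            (Submodule.comap
                (LinearMap.ker (cobarD (Coalgebra.comul (R := K) (A := C)) (i+1) B)).subtype
                (LinearMap.range (cobarD (Coalgebra.comul (R := K) (A := C)) i B))).mkQ) =
          (Submodule.comap
              (LinearMap.ker (cobarD (Coalgebra.comul (R := K) (A := C)) (i+1) B)).subtype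
              (LinearMap.range (cobarD (Coalgebra.comul (R := K) (A := C)) i B))).mkQ ∘ₗ
            aker) := by
  -- pointwise forms of the bimodule-morphism hypotheses
  have hL : ∀ (d : D) (m : B.carrier), B.coactR (aL (d ⊗ₜ[K] m)) =
      LinearMap.rTensor C (aL ∘ₗ TensorProduct.mk K D B.carrier d) (B.coactR m) := by
    intro d m
    have h := LinearMap.congr_fun hcoactR_aL (d ⊗ₜ[K] m)
    simp only [LinearMap.comp_apply, LinearMap.lTensor_tmul, LinearEquiv.coe_coe] at h
    rw [hlp] at h
    exact h
  have hR : ∀ (m : B.carrier) (d : D), B.coactR (aR (m ⊗ₜ[K] d)) =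
      LinearMap.rTensor C (aR ∘ₗ (TensorProduct.mk K B.carrier D).flip d) (B.coactR m) := by
    intro m d
    have h := LinearMap.congr_fun hcoactR_aR (m ⊗ₜ[K] d)
    simp only [LinearMap.comp_apply, LinearMap.rTensor_tmul, LinearEquiv.coe_coe] at h
    rw [hlpR] at h
    exact h
  have h1 : Pt B.coactR (adjointAction aL aR) := Pt_adjoint hL hR
  have h2 : Pt ((TensorProduct.comm K C B.carrier).toLinearMap ∘ₗ B.coactL)
      (adjointAction aL aR) := by
    intro d m
    simp [htriv]
  have part1 : ∀ i : ℕ,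
      (cobarD (Coalgebra.comul (R := K) (A := C)) i B) ∘ₗ
          Dact (Coalgebra.comul (R := K) (A := C)) D i B (adjointAction aL aR) =
        Dact (Coalgebra.comul (R := K) (A := C)) D (i+1) B (adjointAction aL aR) ∘ₗ
          (LinearMap.lTensor D (cobarD (Coalgebra.comul (R := K) (A := C)) i B)) :=
    fun i => mainLemma (Coalgebra.comul (R := K) (A := C)) i B (adjointAction aL aR) h1 h2
  refine ⟨part1, ?_, ?_⟩
  · -- part (2): the cocycles are stable under the action
    intro i
    have hz : cobarD (Coalgebra.comul (R := K) (A := C)) i B ∘ₗ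
        (LinearMap.ker (cobarD (Coalgebra.comul (R := K) (A := C)) i B)).subtype = 0 := by
      ext x
      exact x.2
    have hmem : ∀ x : D ⊗[K] LinearMap.ker (cobarD (Coalgebra.comul (R := K) (A := C)) i B),
        (Dact (Coalgebra.comul (R := K) (A := C)) D i B (adjointAction aL aR) ∘ₗ
          LinearMap.lTensor D
            (LinearMap.ker (cobarD (Coalgebra.comul (R := K) (A := C)) i B)).subtype) x ∈
          LinearMap.ker (cobarD (Coalgebra.comul (R := K) (A := C)) i B) := by
      intro x
      rw [LinearMap.mem_ker, LinearMap.comp_apply]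
      have h := LinearMap.congr_fun (part1 i) (LinearMap.lTensor D
        (LinearMap.ker (cobarD (Coalgebra.comul (R := K) (A := C)) i B)).subtype x)
      rw [LinearMap.comp_apply, LinearMap.comp_apply] at h
      rw [h, ← LinearMap.lTensor_comp_apply, hz, LinearMap.lTensor_zero,
        LinearMap.zero_apply, map_zero]
    exact ⟨LinearMap.codRestrict _ _ hmem, LinearMap.subtype_comp_codRestrict _ _ hmem⟩
  · -- part (3): the action descends to homology
    intro i aker hker
    apply descendAux
    intro y
    induction y using TensorProduct.induction_on with
    | zero => simp
    | tmul d s =>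
      rw [LinearMap.lTensor_tmul, Submodule.mem_comap]
      obtain ⟨z, hz⟩ := Submodule.mem_comap.mp s.2
      have h := LinearMap.congr_fun hker (d ⊗ₜ[K] (s : LinearMap.ker
        (cobarD (Coalgebra.comul (R := K) (A := C)) (i+1) B)))
      simp only [LinearMap.comp_apply, LinearMap.lTensor_tmul, Submodule.coe_subtype]
        at h hz ⊢
      rw [h, ← hz]
      have h2 := LinearMap.congr_fun (part1 i) (d ⊗ₜ[K] z)
      simp only [LinearMap.comp_apply, LinearMap.lTensor_tmul] at h2
      exact ⟨Dact (Coalgebra.comul (R := K) (A := C)) D i B (adjointAction aL aR)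
        (d ⊗ₜ[K] z), h2⟩
    | add y1 y2 hy1 hy2 =>
      rw [map_add, map_add]
      exact Submodule.add_mem _ hy1 hy2
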